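/- arXiv:1802.06048 — 3 statements merged into one kernel-verified Lean document; each statement's English description precedes it below -/
import Mathlib

section
/- Let A be a p × p real matrix of rank r (with r ≤ p). Then the number of indices j ∈ {1,...,p} such that the j-th column of A is dominated by its diagonal entry in the ℓ2 sense, i.e., A_{jj}² > Σ_{i ≠ j} A_{ij}², is at most 2r − 1. -/
open Matrix BigOperators Finset

lemma trace_sq_le_rank_mul_frob {p : ℕ} (M : Matrix (Fin p) (Fin p) ℝ) :
    (Matrix.trace M)^2 ≤ (M.rank : ℝ) * ∑ i, ∑ j, (M i j)^2 := by
  classical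
  set ρ := M.rank with hρ
  let e : (Fin p → ℝ) ≃ₗ[ℝ] EuclideanSpace ℝ (Fin p) :=
    (WithLp.linearEquiv 2 ℝ (Fin p → ℝ)).symm
  let K : Submodule ℝ (EuclideanSpace ℝ (Fin p)) :=
    (LinearMap.range M.mulVecLin).map (e : (Fin p → ℝ) →ₗ[ℝ] _)
  have hfin : Module.finrank ℝ K = ρ := by
    rw [show K = (LinearMap.range M.mulVecLin).map (e : (Fin p → ℝ) →ₗ[ℝ] _) from rfl,
      LinearEquiv.finrank_map_eq]; rfl
  let b : OrthonormalBasis (Fin ρ) ℝ K :=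
    (stdOrthonormalBasis ℝ K).reindex (finCongr hfin)
  let U : Matrix (Fin p) (Fin ρ) ℝ := fun i k => (b k : EuclideanSpace ℝ (Fin p)) i
  have horth : ∀ k l, ∑ i, U i k * U i l = if k = l then 1 else 0 := by
    intro k l
    have hb := b.orthonormal
    rw [orthonormal_iff_ite] at hb
    have := hb k l
    rw [Submodule.coe_inner, PiLp.inner_apply] at this
    simp [RCLike.inner_apply, conj_trivial] at this
    rw [← this]; exact Finset.sum_congr rfl fun i _ => mul_comm _ _
  have hUtU : Uᵀ * U = 1 := by
    ext k l
    simp only [Matrix.mul_apply, transpose_apply, Matrix.one_apply]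
    exact horth k l
  -- every element of the range is fixed by U * Uᵀ
  have hfix : ∀ v : EuclideanSpace ℝ (Fin p), (v : EuclideanSpace ℝ (Fin p)) ∈ K →
      ∀ i, ∑ k, U i k * (∑ j, U j k * v j) = v i := by
    intro v hv i
    have hrep := b.sum_repr ⟨v, hv⟩
    have hco : ∀ k, b.repr ⟨v, hv⟩ k = ∑ j, U j k * v j := by
      intro k
      rw [b.repr_apply_apply]
      rw [Submodule.coe_inner, PiLp.inner_apply]
      simp [RCLike.inner_apply, conj_trivial, U]
      exact Finset.sum_congr rfl fun j _ => mul_comm _ _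
    have h2 : (∑ k, b.repr ⟨v, hv⟩ k • (b k : EuclideanSpace ℝ (Fin p))) = v := by
      have h2' := congrArg (Subtype.val) hrep
      simp only [AddSubmonoidClass.coe_finset_sum, SetLike.val_smul] at h2'
      exact h2'
    let ev : EuclideanSpace ℝ (Fin p) →ₗ[ℝ] ℝ :=
      (LinearMap.proj i) ∘ₗ (WithLp.linearEquiv 2 ℝ (Fin p → ℝ)).toLinearMap
    have hev : ∀ u : EuclideanSpace ℝ (Fin p), ev u = u i := fun u => rfl
    have h4 := map_sum ev (fun k => b.repr ⟨v, hv⟩ k • (b k : EuclideanSpace ℝ (Fin p)))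
      Finset.univ
    rw [h2] at h4
    rw [hev] at h4
    have h5 : v i = ∑ k, b.repr ⟨v, hv⟩ k * (b k : EuclideanSpace ℝ (Fin p)) i := by
      rw [h4]
      refine Finset.sum_congr rfl fun k _ => ?_
      rw [_root_.map_smul, hev, smul_eq_mul]
    rw [h5]
    refine Finset.sum_congr rfl fun k _ => ?_
    rw [hco k]; ring
  have hPM : U * (Uᵀ * M) = M := by
    ext i j
    have hcol : (e (M *ᵥ Pi.single j 1) : EuclideanSpace ℝ (Fin p)) ∈ K :=
      Submodule.mem_map_of_mem (LinearMap.mem_range_self _ _)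
    have hval : ∀ i', (e (M *ᵥ Pi.single j 1)) i' = M i' j := by
      intro i'
      have : (M *ᵥ Pi.single j 1) i' = M i' j := by
        simp [Matrix.mulVec_single]
      simpa [e] using this
    have := hfix _ hcol i
    simp only [hval] at this
    rw [← this]
    simp [Matrix.mul_apply, Finset.mul_sum, mul_comm]
  set Q : Matrix (Fin ρ) (Fin ρ) ℝ := Uᵀ * M * U with hQ
  have htr : Matrix.trace M = Matrix.trace Q := by
    conv_lhs => rw [← hPM]
    rw [Matrix.trace_mul_comm, hQ, Matrix.mul_assoc]
  -- Cauchy-Schwarz steps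
  have step1 : (Matrix.trace Q)^2 ≤ (ρ : ℝ) * ∑ k, (Q k k)^2 := by
    have := sq_sum_le_card_mul_sum_sq (s := (univ : Finset (Fin ρ))) (f := fun k => Q k k)
    simpa [Matrix.trace, Matrix.diag] using this
  have step2 : ∀ k, (Q k k)^2 ≤ ∑ i, ((M * U) i k)^2 := by
    intro k
    have hQkk : Q k k = ∑ i, U i k * (M * U) i k := by
      rw [hQ, Matrix.mul_assoc]
      simp [Matrix.mul_apply, transpose_apply]
    rw [hQkk]
    calc (∑ i, U i k * (M * U) i k)^2
        ≤ (∑ i, (U i k)^2) * ∑ i, ((M * U) i k)^2 :=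
          Finset.sum_mul_sq_le_sq_mul_sq _ _ _
      _ = ∑ i, ((M * U) i k)^2 := by
          have h1 : (∑ i, (U i k)^2) = 1 := by
            simpa [pow_two] using horth k k
          rw [h1, one_mul]
  have step3 : ∑ k, ∑ i, ((M * U) i k)^2 ≤ ∑ i, ∑ j, (M i j)^2 := by
    rw [Finset.sum_comm]
    refine Finset.sum_le_sum fun i _ => ?_
    set x : Fin p → ℝ := fun j => M i j with hx
    set w : Fin ρ → ℝ := fun k => ∑ j, U j k * x j with hw
    have hMU : ∀ k, (M * U) i k = w k := by
      intro k; simp [Matrix.mul_apply, hw, hx, mul_comm]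
    set t : ℝ := ∑ k, (w k)^2 with ht
    have hyy : ∑ j, (∑ k, U j k * w k)^2 = t := by
      have expand : ∑ j, (∑ k, U j k * w k)^2
          = ∑ k, ∑ l, (w k * w l) * (∑ j, U j k * U j l) := by
        simp_rw [sq, Finset.sum_mul_sum, Finset.mul_sum]
        rw [Finset.sum_comm]
        refine Finset.sum_congr rfl fun k _ => ?_
        rw [Finset.sum_comm]
        refine Finset.sum_congr rfl fun l _ => ?_
        refine Finset.sum_congr rfl fun j _ => ?_
        ring
      rw [expand]
      rw [ht]
      refine Finset.sum_congr rfl fun k _ => ?_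
      rw [Finset.sum_eq_single k]
      · rw [horth k k]; simp [sq]
      · intro l _ hl; rw [horth k l, if_neg (Ne.symm hl)]; ring
      · simp
    have htxy : t = ∑ j, x j * (∑ k, U j k * w k) := by
      have lhs : t = ∑ k, ∑ j, x j * (U j k * w k) := by
        rw [ht]
        refine Finset.sum_congr rfl fun k _ => ?_
        have hwk : w k = ∑ j, U j k * x j := rfl
        calc (w k)^2 = w k * ∑ j, U j k * x j := by rw [sq, ← hwk]
          _ = ∑ j, x j * (U j k * w k) := by
              rw [Finset.mul_sum]
              exact Finset.sum_congr rfl fun j _ => by ring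
      rw [lhs, Finset.sum_comm]
      exact Finset.sum_congr rfl fun j _ => (Finset.mul_sum _ _ _).symm
    have hcs : t^2 ≤ (∑ j, (x j)^2) * t := by
      calc t^2 = (∑ j, x j * (∑ k, U j k * w k))^2 := by rw [htxy]
        _ ≤ (∑ j, (x j)^2) * ∑ j, (∑ k, U j k * w k)^2 :=
            Finset.sum_mul_sq_le_sq_mul_sq _ _ _
        _ = (∑ j, (x j)^2) * t := by rw [hyy]
    have ht0 : 0 ≤ t := Finset.sum_nonneg fun k _ => sq_nonneg _
    have hX0 : (0:ℝ) ≤ ∑ j, (x j)^2 := Finset.sum_nonneg fun j _ => sq_nonneg _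
    have : t ≤ ∑ j, (x j)^2 := by nlinarith [hcs, ht0, hX0]
    calc ∑ k, ((M * U) i k)^2 = t := by rw [ht]; exact Finset.sum_congr rfl fun k _ => by rw [hMU]
      _ ≤ ∑ j, (x j)^2 := this
  calc (Matrix.trace M)^2 = (Matrix.trace Q)^2 := by rw [htr]
    _ ≤ (ρ : ℝ) * ∑ k, (Q k k)^2 := step1
    _ ≤ (ρ : ℝ) * ∑ k, ∑ i, ((M * U) i k)^2 := by
        refine mul_le_mul_of_nonneg_left (Finset.sum_le_sum fun k _ => step2 k) (by positivity)
    _ ≤ (ρ : ℝ) * ∑ i, ∑ j, (M i j)^2 := mul_le_mul_of_nonneg_left step3 (by positivity)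
/-- Lemma 3: A p×p real matrix of rank r has at most 2r−1 columns that are
dominated by their diagonal entry in the ℓ2 sense. -/
theorem diag_dominant_columns_le {p r : ℕ} (A : Matrix (Fin p) (Fin p) ℝ)
    (hr : A.rank = r) (hr1 : 1 ≤ r) :
    (Finset.univ.filter fun j : Fin p =>
        (∑ i ∈ Finset.univ.erase j, (A i j) ^ 2) < (A j j) ^ 2).card ≤ 2 * r - 1 := by
  classical
  set S := Finset.univ.filter (fun j : Fin p =>
      (∑ i ∈ Finset.univ.erase j, (A i j) ^ 2) < (A j j) ^ 2) with hS
  rcases Nat.eq_zero_or_pos S.card with hs0 | hs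
  · omega
  have hsne : S.Nonempty := Finset.card_pos.mp hs
  have hcond : ∀ j ∈ S, (∑ i ∈ Finset.univ.erase j, (A i j) ^ 2) < (A j j) ^ 2 := by
    intro j hj; exact (Finset.mem_filter.mp hj).2
  have hdiag : ∀ j ∈ S, A j j ≠ 0 := by
    intro j hj h0
    have h1 := hcond j hj
    have h2 : (0:ℝ) ≤ ∑ i ∈ Finset.univ.erase j, (A i j) ^ 2 :=
      Finset.sum_nonneg fun i _ => sq_nonneg _
    have h5 : (A j j)^2 = 0 := by rw [h0]; ring
    linarith
  set d : Fin p → ℝ := fun j => if j ∈ S then (A j j)⁻¹ else 0 with hd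
  set C := A * Matrix.diagonal d with hC
  have hCapp : ∀ i j, C i j = A i j * d j := by
    intro i j; rw [hC, Matrix.mul_diagonal]
  -- rank bound
  have hrankC : C.rank ≤ r := hr ▸ Matrix.rank_mul_le_left A (Matrix.diagonal d)
  -- trace
  have htrC : Matrix.trace C = (S.card : ℝ) := by
    rw [Matrix.trace]
    have : ∀ j, Matrix.diag C j = if j ∈ S then (1:ℝ) else 0 := by
      intro j
      rw [Matrix.diag_apply, hCapp, hd]
      by_cases hj : j ∈ S
      · simp [hj, mul_inv_cancel₀ (hdiag j hj)]
      · simp [hj]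
    rw [Finset.sum_congr rfl fun j _ => this j]
    simp [hS]
  -- Frobenius norm bound
  have hcol : ∀ j ∈ S, (∑ i, (C i j)^2) < 2 := by
    intro j hj
    have hne := hdiag j hj
    have hsum : (∑ i, (A i j)^2) < 2 * (A j j)^2 := by
      have h4 : (∑ i ∈ Finset.univ.erase j, (A i j)^2) + (A j j)^2 = ∑ i, (A i j)^2 :=
        Finset.sum_erase_add _ _ (Finset.mem_univ j)
      have h1 := hcond j hj
      linarith
    have heq : (∑ i, (C i j)^2) = (∑ i, (A i j)^2) * ((A j j)⁻¹)^2 := by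
      rw [Finset.sum_mul]
      refine Finset.sum_congr rfl fun i _ => ?_
      rw [hCapp, hd]; simp only [if_pos hj]; ring
    rw [heq]
    have h2 : ((A j j)⁻¹)^2 > 0 := by positivity
    have h3 : (2 * (A j j)^2) * ((A j j)⁻¹)^2 = 2 := by
      field_simp
    nlinarith [hsum, h2]
  have hcol0 : ∀ j, j ∉ S → (∑ i, (C i j)^2) = 0 := by
    intro j hj
    refine Finset.sum_eq_zero fun i _ => ?_
    rw [hCapp, hd]; simp [hj]
  have hfrob : (∑ i, ∑ j, (C i j)^2) < 2 * (S.card : ℝ) := by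
    rw [Finset.sum_comm]
    have h1 : (∑ j, ∑ i, (C i j)^2) = ∑ j ∈ S, ∑ i, (C i j)^2 := by
      symm
      refine Finset.sum_subset (Finset.subset_univ S) ?_
      intro j _ hj; exact hcol0 j hj
    rw [h1]
    calc (∑ j ∈ S, ∑ i, (C i j)^2) < ∑ j ∈ S, 2 :=
          Finset.sum_lt_sum_of_nonempty hsne fun j hj => hcol j hj
      _ = 2 * (S.card : ℝ) := by rw [Finset.sum_const]; push_cast; ring
  have hkey := trace_sq_le_rank_mul_frob C
  rw [htrC] at hkey
  have hF0 : (0:ℝ) ≤ ∑ i, ∑ j, (C i j)^2 :=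
    Finset.sum_nonneg fun i _ => Finset.sum_nonneg fun j _ => sq_nonneg _
  have hrC : (C.rank : ℝ) ≤ (r : ℝ) := by exact_mod_cast hrankC
  have hr0 : (1:ℝ) ≤ (r:ℝ) := by exact_mod_cast hr1
  have hs0 : (1:ℝ) ≤ (S.card : ℝ) := by exact_mod_cast hs
  have hlt : (S.card : ℝ) < 2 * r := by
    nlinarith [hkey, hF0, hrC, hr0, hs0, hfrob,
      mul_le_mul_of_nonneg_right hrC hF0]
  have : S.card < 2 * r := by exact_mod_cast hlt
  omega
end

section
/- If a p × p real symmetric matrix M can be written as M = L + D with L symmetric of rank at most r and D diagonal, then M can also be written as M = L' + D' with L' symmetric of rank at most 3r, D' diagonal, and ‖M‖_F² ≥ (1/8)(‖L'‖_F² + ‖D'‖_F²). -/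
open Matrix

-- rank subadditivity for matrices
lemma my_rank_add_le {p : ℕ} (A B : Matrix (Fin p) (Fin p) ℝ) :
    (A + B).rank ≤ A.rank + B.rank := by
  classical
  have h : LinearMap.range (A + B).mulVecLin ≤
      LinearMap.range A.mulVecLin ⊔ LinearMap.range B.mulVecLin := by
    rintro x ⟨v, rfl⟩
    refine Submodule.mem_sup.mpr ⟨A.mulVecLin v, ⟨v, rfl⟩, B.mulVecLin v, ⟨v, rfl⟩, ?_⟩
    simp [Matrix.mulVecLin_apply, Matrix.add_mulVec]
  calc (A + B).rank ≤ Module.finrank ℝ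
        ↥(LinearMap.range A.mulVecLin ⊔ LinearMap.range B.mulVecLin) :=
        Submodule.finrank_mono h
    _ ≤ A.rank + B.rank := Submodule.finrank_add_le_finrank_add_finrank _ _

lemma exists_weights' {p : ℕ} (L : Matrix (Fin p) (Fin p) ℝ) (hL : Lᵀ = L) :
    ∃ w : Fin p → ℝ, (∀ i, 0 ≤ w i) ∧ (∑ i, w i ≤ (L.rank : ℝ)) ∧
      ∀ i, (L i i) ^ 2 ≤ w i * ∑ j, (L j i) ^ 2 := by
  classical
  have hH : L.IsHermitian := by
    rw [Matrix.IsHermitian, Matrix.conjTranspose, hL]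
    ext i j; simp
  set U : Matrix (Fin p) (Fin p) ℝ := (hH.eigenvectorUnitary : Matrix (Fin p) (Fin p) ℝ) with hU
  set μ : Fin p → ℝ := hH.eigenvalues with hμ
  have hstar : star U * U = 1 :=
    (Matrix.mem_unitaryGroup_iff').mp hH.eigenvectorUnitary.2
  have hcol : ∀ k l, (∑ i, U i k * U i l) = if k = l then (1:ℝ) else 0 := by
    intro k l
    have := congrFun (congrFun hstar k) l
    simp only [Matrix.mul_apply, Matrix.star_apply, star_trivial, Matrix.one_apply] at this
    simpa [mul_comm] using this
  have hentry : ∀ i j, L j i = ∑ k, U j k * μ k * U i k := by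
    intro i j
    conv_lhs => rw [hH.spectral_theorem, Unitary.conjStarAlgAut_apply]
    rw [Matrix.mul_apply]
    refine Finset.sum_congr rfl fun k _ => ?_
    rw [Matrix.mul_diagonal]
    simp only [Matrix.star_apply, star_trivial, Matrix.IsHermitian.eigenvectorUnitary_apply]
    simp [hU, Matrix.IsHermitian.eigenvectorUnitary_apply, mul_comm, hμ]
  have hLL : ∀ i, ∑ j, (L j i) ^ 2 = ∑ k, μ k ^ 2 * U i k ^ 2 := by
    intro i
    have h1 : ∀ j, (L j i) ^ 2
        = ∑ k, ∑ l, ((μ k * U i k) * (μ l * U i l)) * (U j k * U j l) := by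
      intro j
      rw [hentry i j, sq, Finset.sum_mul_sum]
      exact Finset.sum_congr rfl fun k _ => Finset.sum_congr rfl fun l _ => by ring
    calc ∑ j, (L j i) ^ 2
        = ∑ j, ∑ k, ∑ l, ((μ k * U i k) * (μ l * U i l)) * (U j k * U j l) :=
          Finset.sum_congr rfl fun j _ => h1 j
      _ = ∑ k, ∑ l, ((μ k * U i k) * (μ l * U i l)) * ∑ j, (U j k * U j l) := by
          rw [Finset.sum_comm]
          refine Finset.sum_congr rfl fun k _ => ?_
          rw [Finset.sum_comm]
          exact Finset.sum_congr rfl fun l _ => (Finset.mul_sum _ _ _).symm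
      _ = ∑ k, μ k ^ 2 * U i k ^ 2 := by
          refine Finset.sum_congr rfl fun k _ => ?_
          rw [Finset.sum_congr rfl fun l (_ : l ∈ Finset.univ) => by rw [hcol k l]]
          simp only [mul_ite, mul_one, mul_zero, Finset.sum_ite_eq, Finset.mem_univ, if_pos]
          ring
  set S : Finset (Fin p) := Finset.univ.filter (fun k => μ k ≠ 0) with hS
  refine ⟨fun i => ∑ k ∈ S, (U i k) ^ 2, fun i => Finset.sum_nonneg fun k _ => sq_nonneg _, ?_, ?_⟩
  · have hcard : S.card = L.rank := by
      rw [hH.rank_eq_card_non_zero_eigs, Fintype.card_subtype]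
    have hswap : ∑ i, ∑ k ∈ S, (U i k) ^ 2 = ∑ k ∈ S, ∑ i, (U i k) ^ 2 := Finset.sum_comm
    rw [hswap]
    have hone : ∀ k ∈ S, ∑ i, (U i k) ^ 2 = 1 := by
      intro k _
      have h := hcol k k
      norm_num at h
      rw [← h]
      exact Finset.sum_congr rfl fun i _ => sq (U i k)
    rw [Finset.sum_congr rfl hone]
    simp [hcard]
  · intro i
    have hdiag : L i i = ∑ k ∈ S, U i k * (μ k * U i k) := by
      rw [hentry i i]
      rw [← Finset.sum_filter_of_ne (p := fun k => μ k ≠ 0)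
        (fun k _ h hk => h (by rw [hk]; ring))]
      exact Finset.sum_congr rfl fun k _ => by ring
    rw [hdiag]
    calc (∑ k ∈ S, U i k * (μ k * U i k)) ^ 2
        ≤ (∑ k ∈ S, (U i k) ^ 2) * ∑ k ∈ S, (μ k * U i k) ^ 2 :=
          Finset.sum_mul_sq_le_sq_mul_sq S _ _
      _ ≤ (∑ k ∈ S, (U i k) ^ 2) * ∑ j, (L j i) ^ 2 := by
          apply mul_le_mul_of_nonneg_left _ (Finset.sum_nonneg fun k _ => sq_nonneg _)
          rw [hLL i]
          have heq : ∑ k ∈ S, (μ k * U i k) ^ 2 = ∑ k ∈ S, μ k ^ 2 * U i k ^ 2 :=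
            Finset.sum_congr rfl fun k _ => by ring
          rw [heq]
          exact Finset.sum_le_sum_of_subset_of_nonneg (Finset.filter_subset _ _)
            (fun k _ _ => mul_nonneg (sq_nonneg _) (sq_nonneg _))

/-- Lemma 2: a symmetric matrix M = L + D (L symmetric of rank ≤ r, D diagonal)
can be rewritten as M = L' + D' with rank L' ≤ 3r, D' diagonal, and
‖M‖_F² ≥ (1/8)(‖L'‖_F² + ‖D'‖_F²). -/
theorem low_rank_plus_diag_rewrite {p r : ℕ} (M L D : Matrix (Fin p) (Fin p) ℝ)
    (hM : Mᵀ = M) (hL : Lᵀ = L) (hLr : L.rank ≤ r) (hD : D.IsDiag) (hMLD : M = L + D) :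
    ∃ L' D' : Matrix (Fin p) (Fin p) ℝ,
      L'ᵀ = L' ∧ L'.rank ≤ 3 * r ∧ D'.IsDiag ∧ M = L' + D' ∧
      (1 / 8) * ((∑ i, ∑ j, (L' i j) ^ 2) + (∑ i, ∑ j, (D' i j) ^ 2))
        ≤ ∑ i, ∑ j, (M i j) ^ 2 := by
  classical
  obtain ⟨w, hw0, hwsum, hwkey⟩ := exists_weights' L hL
  set d : Fin p → ℝ := fun i => if (1:ℝ)/2 ≤ w i then 0 else M i i - L i i with hd
  refine ⟨M - Matrix.diagonal d, Matrix.diagonal d, ?_, ?_, Matrix.isDiag_diagonal d, ?_, ?_⟩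
  · rw [Matrix.transpose_sub, hM, Matrix.diagonal_transpose]
  · -- rank bound
    set e : Fin p → ℝ := fun i => if (1:ℝ)/2 ≤ w i then D i i else 0 with he
    have hsplit : M - Matrix.diagonal d = L + Matrix.diagonal e := by
      ext i j
      by_cases hij : i = j
      · subst hij
        have hMi : M i i = L i i + D i i := by rw [hMLD]; simp
        simp only [Matrix.sub_apply, Matrix.add_apply, Matrix.diagonal_apply_eq, hd, he]
        split_ifs <;> [linarith; ring]
      · have hDij : D i j = 0 := hD hij
        have hMij : M i j = L i j := by rw [hMLD]; simp [hDij]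
        simp [Matrix.diagonal_apply_ne _ hij, hMij]
    rw [hsplit]
    have hT : (Finset.univ.filter (fun i => (1:ℝ)/2 ≤ w i)).card ≤ 2 * r := by
      have h1 : ((Finset.univ.filter (fun i => (1:ℝ)/2 ≤ w i)).card : ℝ) * (1/2)
          ≤ ∑ i ∈ Finset.univ.filter (fun i => (1:ℝ)/2 ≤ w i), w i := by
        have := Finset.card_nsmul_le_sum (Finset.univ.filter (fun i => (1:ℝ)/2 ≤ w i)) w (1/2)
          (fun i hi => (Finset.mem_filter.mp hi).2)
        simpa [nsmul_eq_mul] using this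
      have h2 : ∑ i ∈ Finset.univ.filter (fun i => (1:ℝ)/2 ≤ w i), w i ≤ ∑ i, w i :=
        Finset.sum_le_sum_of_subset_of_nonneg (Finset.filter_subset _ _)
          (fun i _ _ => hw0 i)
      have h3 : (L.rank : ℝ) ≤ (r : ℝ) := by exact_mod_cast hLr
      have : ((Finset.univ.filter (fun i => (1:ℝ)/2 ≤ w i)).card : ℝ) ≤ 2 * r := by linarith
      exact_mod_cast this
    have hre : (Matrix.diagonal e).rank ≤ 2 * r := by
      rw [Matrix.rank_diagonal]
      rw [Fintype.card_subtype]
      refine le_trans (Finset.card_le_card ?_) hT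
      intro i hi
      simp only [Finset.mem_filter, Finset.mem_univ, true_and] at hi ⊢
      by_contra hci
      exact hi (by simp only [he]; rw [if_neg hci])
    calc (L + Matrix.diagonal e).rank ≤ L.rank + (Matrix.diagonal e).rank :=
          my_rank_add_le _ _
      _ ≤ r + 2 * r := add_le_add hLr hre
      _ = 3 * r := by ring
  · ext i j; simp
  · -- norm inequality
    have hrow : ∀ i, (∑ j, ((M - Matrix.diagonal d) i j) ^ 2) + (∑ j, (Matrix.diagonal d i j) ^ 2)
        ≤ 8 * ∑ j, (M i j) ^ 2 := by
      intro i
      have hAi : (0:ℝ) ≤ ∑ j ∈ Finset.univ.erase i, (M i j) ^ 2 :=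
        Finset.sum_nonneg fun j _ => sq_nonneg _
      have hoff : ∀ j ∈ Finset.univ.erase i, ((M - Matrix.diagonal d) i j) ^ 2 = (M i j) ^ 2 := by
        intro j hj
        have hij : i ≠ j := fun h => (Finset.mem_erase.mp hj).1 h.symm
        simp [Matrix.diagonal_apply_ne _ hij]
      have hoffD : ∀ j ∈ Finset.univ.erase i, (Matrix.diagonal d i j) ^ 2 = 0 := by
        intro j hj
        have hij : i ≠ j := fun h => (Finset.mem_erase.mp hj).1 h.symm
        simp [Matrix.diagonal_apply_ne _ hij]
      rw [← Finset.add_sum_erase _ _ (Finset.mem_univ i),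
          ← Finset.add_sum_erase _ (fun j => (Matrix.diagonal d i j) ^ 2) (Finset.mem_univ i),
          ← Finset.add_sum_erase _ (fun j => (M i j) ^ 2) (Finset.mem_univ i),
          Finset.sum_congr rfl hoff, Finset.sum_congr rfl hoffD, Finset.sum_const_zero]
      simp only [Matrix.sub_apply, Matrix.diagonal_apply_eq]
      by_cases hci : (1:ℝ)/2 ≤ w i
      · simp only [hd, if_pos hci]
        nlinarith [hAi, sq_nonneg (M i i)]
      · -- key: (L i i)^2 ≤ off-row sum
        have hw2 : w i < 1/2 := lt_of_not_ge hci
        have hLcol : ∑ j, (L j i) ^ 2 = (L i i) ^ 2 + ∑ j ∈ Finset.univ.erase i, (M i j) ^ 2 := by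
          rw [← Finset.add_sum_erase _ (fun j => (L j i) ^ 2) (Finset.mem_univ i)]
          congr 1
          refine Finset.sum_congr rfl fun j hj => ?_
          have hji : j ≠ i := (Finset.mem_erase.mp hj).1
          have hDji : D j i = 0 := hD hji
          have h1 : M j i = L j i := by rw [hMLD]; simp [hDji]
          have h2 : M i j = M j i := by conv_lhs => rw [← hM, Matrix.transpose_apply]
          rw [h2, h1]
        have hkey := hwkey i
        have hXnn : (0:ℝ) ≤ ∑ j, (L j i) ^ 2 := Finset.sum_nonneg fun j _ => sq_nonneg _
        have hLii : (L i i) ^ 2 ≤ ∑ j ∈ Finset.univ.erase i, (M i j) ^ 2 := by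
          nlinarith [hkey, hXnn, hw0 i]
        simp only [hd, if_neg hci]
        nlinarith [hLii, hAi, sq_nonneg (M i i), sq_nonneg (M i i - L i i), sq_nonneg (L i i)]
    have h1 : (∑ i, ∑ j, ((M - Matrix.diagonal d) i j) ^ 2)
        + (∑ i, ∑ j, (Matrix.diagonal d i j) ^ 2) ≤ 8 * ∑ i, ∑ j, (M i j) ^ 2 := by
      rw [← Finset.sum_add_distrib, Finset.mul_sum]
      exact Finset.sum_le_sum fun i _ => hrow i
    linarith
end

section
/- Let D be a positive definite diagonal p × p matrix and S a symmetric positive semi-definite p × p matrix. Let w_1 ≥ ... ≥ w_p be the eigenvalues of D^{1/2} S D^{1/2} with orthonormal eigenvectors u_1,...,u_p. Fix r ≤ p, set U = (u_1,...,u_r), V = diag(1 − 1/max(w_1,1), ..., 1 − 1/max(w_r,1)), and L* = D^{1/2} U V U^T D^{1/2}. Then L* is symmetric positive semi-definite of rank at most r, D − L* is positive definite, and L* minimizes the objective trace((D−L)S) − log det(D−L) over all symmetric PSD matrices L of rank at most r with D − L positive definite. -/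
open Matrix

section
open scoped ComplexOrder

/-- The positive semidefinite square root of a positive semidefinite matrix, as defined in
Mathlib of December 2024 (`Matrix.PosSemidef.sqrt`, since removed). -/
noncomputable def Matrix.PosSemidef.sqrt {n 𝕜 : Type*} [Fintype n] [DecidableEq n] [RCLike 𝕜]
    {A : Matrix n n 𝕜} (hA : A.PosSemidef) : Matrix n n 𝕜 :=
  hA.1.eigenvectorUnitary.1 * diagonal ((↑) ∘ (Real.sqrt ∘ hA.1.eigenvalues)) *
    (star hA.1.eigenvectorUnitary : Matrix n n 𝕜)

end

noncomputable def psi (w : ℝ) : ℝ := if 1 ≤ w then w - 1 - Real.log w else 0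

lemma psi_nonneg (w : ℝ) : 0 ≤ psi w := by
  unfold psi; split
  · have := Real.log_le_sub_one_of_pos (lt_of_lt_of_le one_pos ‹_›); linarith
  · exact le_refl _

lemma psi_mono {x y : ℝ} (hxy : x ≤ y) : psi x ≤ psi y := by
  unfold psi
  rcases le_or_gt 1 x with hx | hx <;> rcases le_or_gt 1 y with hy | hy
  · rw [if_pos hx, if_pos hy]
    have hx0 : 0 < x := lt_of_lt_of_le one_pos hx
    have hy0 : 0 < y := lt_of_lt_of_le one_pos hy
    have h1 : Real.log y - Real.log x = Real.log (y / x) := (Real.log_div hy0.ne' hx0.ne').symm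
    have h2 : Real.log (y / x) ≤ y / x - 1 := Real.log_le_sub_one_of_pos (by positivity)
    have h3 : y / x - 1 ≤ y - x := by
      rw [div_sub_one hx0.ne']
      rw [div_le_iff₀ hx0]
      nlinarith
    linarith
  · linarith
  · rw [if_neg (not_le.mpr hx), if_pos hy]
    have := Real.log_le_sub_one_of_pos (lt_of_lt_of_le one_pos hy); linarith
  · rw [if_neg (not_le.mpr hx), if_neg (not_le.mpr hy)]

lemma key_scalar {w z : ℝ} (hw : 0 ≤ w) (hz0 : 0 < z) (hz1 : z ≤ 1) :
    w - psi w ≤ w * z - Real.log z := by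
  unfold psi; split
  · rename_i h
    have hw0 : 0 < w := lt_of_lt_of_le one_pos h
    have hwz : 0 < w * z := mul_pos hw0 hz0
    have h1 := Real.log_le_sub_one_of_pos hwz
    rw [Real.log_mul hw0.ne' hz0.ne'] at h1
    linarith
  · rename_i h
    push_neg at h
    have h1 := Real.log_le_sub_one_of_pos hz0
    nlinarith [mul_nonneg (sub_nonneg.mpr hz1) (sub_nonneg.mpr h.le)]

lemma opt_scalar {w : ℝ} (hw : 0 ≤ w) :
    w * (1 / max w 1) - Real.log (1 / max w 1) = w - psi w := by
  unfold psi
  rcases le_or_gt 1 w with h | h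
  · rw [max_eq_left h, if_pos h]
    have hw0 : 0 < w := lt_of_lt_of_le one_pos h
    rw [one_div, Real.log_inv, mul_inv_cancel₀ hw0.ne']
    ring
  · rw [max_eq_right h.le, if_neg (not_le.mpr h)]
    simp

lemma filter_lt_eq_map {p r : ℕ} (hr : r ≤ p) :
    Finset.univ.filter (fun i : Fin p => (i : ℕ) < r) =
      (Finset.univ : Finset (Fin r)).map ⟨Fin.castLE hr, Fin.castLE_injective hr⟩ := by
  ext i
  simp only [Finset.mem_filter, Finset.mem_univ, true_and, Finset.mem_map,
    Function.Embedding.coeFn_mk]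
  constructor
  · intro h
    exact ⟨⟨(i : ℕ), h⟩, by simp [Fin.ext_iff]⟩
  · rintro ⟨j, rfl⟩
    exact j.isLt.trans_le (le_refl r)

lemma card_filter_lt {p r : ℕ} (hr : r ≤ p) :
    (Finset.univ.filter (fun i : Fin p => (i : ℕ) < r)).card = r := by
  rw [filter_lt_eq_map hr, Finset.card_map, Finset.card_univ, Fintype.card_fin]

lemma sum_ite_lt {p r : ℕ} (hr : r ≤ p) (f : Fin p → ℝ) :
    ∑ i : Fin p, (if (i : ℕ) < r then f i else 0) = ∑ j : Fin r, f (Fin.castLE hr j) := by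
  rw [← Finset.sum_filter, filter_lt_eq_map hr, Finset.sum_map]
  rfl

lemma sum_t_le {p r : ℕ} (hr : r ≤ p) (a t : Fin p → ℝ)
    (ha0 : ∀ i, 0 ≤ a i) (hamono : ∀ i j : Fin p, i ≤ j → a j ≤ a i)
    (ht0 : ∀ i, 0 ≤ t i) (ht1 : ∀ i, t i ≤ 1)
    (hts : ∑ i, t i ≤ (r : ℝ)) :
    ∑ i, t i * a i ≤ ∑ i : Fin p, (if (i : ℕ) < r then a i else 0) := by
  rcases Nat.eq_zero_or_pos r with rfl | hrpos
  · have h := Finset.sum_eq_zero_iff_of_nonneg (fun i (_ : i ∈ Finset.univ) => ht0 i) |>.mp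
      (le_antisymm (by simpa using hts) (Finset.sum_nonneg fun i _ => ht0 i))
    calc ∑ i, t i * a i = 0 := Finset.sum_eq_zero fun i hi => by rw [h i hi, zero_mul]
    _ ≤ _ := Finset.sum_nonneg fun i _ => by
        split
        · exact ha0 i
        · exact le_refl 0
  · have hpivlt : r - 1 < p := lt_of_lt_of_le (Nat.sub_lt hrpos one_pos) hr
    set piv : Fin p := ⟨r - 1, hpivlt⟩ with hpiv
    set A := Finset.univ.filter (fun i : Fin p => (i : ℕ) < r) with hA
    have hcard : A.card = r := card_filter_lt hr
    have hmemA : ∀ i ∈ A, a piv ≤ a i := by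
      intro i hi
      simp only [hA, Finset.mem_filter, Finset.mem_univ, true_and] at hi
      apply hamono
      rw [Fin.le_def]
      simp only [hpiv]
      omega
    have hmemAc : ∀ i ∈ Finset.univ.filter (fun i : Fin p => ¬ (i : ℕ) < r), a i ≤ a piv := by
      intro i hi
      simp only [Finset.mem_filter, Finset.mem_univ, true_and] at hi
      apply hamono
      rw [Fin.le_def]
      simp only [hpiv]
      omega
    have hsumA : ∑ i ∈ A, t i ≤ (r : ℝ) := by
      calc ∑ i ∈ A, t i ≤ ∑ i, t i :=
        Finset.sum_le_sum_of_subset_of_nonneg (Finset.subset_univ A) (fun i _ _ => ht0 i)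
      _ ≤ (r : ℝ) := hts
    have h1 : ∑ i ∈ Finset.univ.filter (fun i : Fin p => ¬ (i : ℕ) < r), t i
        ≤ ∑ i ∈ A, (1 - t i) := by
      have e1 : ∑ i ∈ A, (1 - t i) = (r : ℝ) - ∑ i ∈ A, t i := by
        rw [Finset.sum_sub_distrib, Finset.sum_const, hcard, nsmul_eq_mul, mul_one]
      have e2 : ∑ i ∈ A, t i + ∑ i ∈ Finset.univ.filter (fun i : Fin p => ¬ (i : ℕ) < r), t i
          = ∑ i, t i := Finset.sum_filter_add_sum_filter_not _ _ _
      linarith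
    calc ∑ i, t i * a i
        = ∑ i ∈ A, t i * a i
          + ∑ i ∈ Finset.univ.filter (fun i : Fin p => ¬ (i : ℕ) < r), t i * a i :=
          (Finset.sum_filter_add_sum_filter_not _ _ _).symm
      _ ≤ ∑ i ∈ A, t i * a i
          + a piv * ∑ i ∈ Finset.univ.filter (fun i : Fin p => ¬ (i : ℕ) < r), t i := by
          rw [Finset.mul_sum]
          refine add_le_add_right (Finset.sum_le_sum fun i hi => ?_) _
          rw [mul_comm (a piv)]
          exact mul_le_mul_of_nonneg_left (hmemAc i hi) (ht0 i)
      _ ≤ ∑ i ∈ A, t i * a i + a piv * ∑ i ∈ A, (1 - t i) :=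
          add_le_add_right (mul_le_mul_of_nonneg_left h1 (ha0 piv)) _
      _ ≤ ∑ i ∈ A, t i * a i + ∑ i ∈ A, (1 - t i) * a i := by
          rw [Finset.mul_sum]
          refine add_le_add_right (Finset.sum_le_sum fun i hi => ?_) _
          rw [mul_comm (a piv)]
          exact mul_le_mul_of_nonneg_left (hmemA i hi) (by linarith [ht1 i])
      _ = ∑ i ∈ A, a i := by
          rw [← Finset.sum_add_distrib]
          exact Finset.sum_congr rfl fun i _ => by ring
      _ = ∑ i : Fin p, (if (i : ℕ) < r then a i else 0) := by rw [hA, Finset.sum_filter]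

lemma conjT_eq {m n : Type*} (A : Matrix m n ℝ) : Aᴴ = Aᵀ := by
  ext i j; simp [conjTranspose_apply]

lemma posDef_conj {n : Type*} [Fintype n] [DecidableEq n]
    {A B : Matrix n n ℝ} (hA : A.PosDef) (hB : IsUnit B) :
    (Bᵀ * A * B).PosDef := by
  refine Matrix.PosDef.of_dotProduct_mulVec_pos ?_ fun x hx => ?_
  · have := isHermitian_conjTranspose_mul_mul B hA.1
    rwa [conjT_eq] at this
  · have hBx : B *ᵥ x ≠ 0 := by
      intro h
      exact hx (Matrix.mulVec_injective_iff_isUnit.mpr hB (h.trans (Matrix.mulVec_zero B).symm))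
    have := hA.dotProduct_mulVec_pos hBx
    rw [star_mulVec, conjT_eq] at this
    rw [← Matrix.mulVec_mulVec, ← Matrix.mulVec_mulVec, Matrix.dotProduct_mulVec (star x)]
    exact this

-- spectral theorem over ℝ, cleaned
lemma real_spectral {n : Type*} [Fintype n] [DecidableEq n] {A : Matrix n n ℝ}
    (hA : A.IsHermitian) :
    A = (hA.eigenvectorUnitary : Matrix n n ℝ) * diagonal hA.eigenvalues *
      (hA.eigenvectorUnitary : Matrix n n ℝ)ᵀ := by
  have h := hA.spectral_theorem
  rw [Unitary.conjStarAlgAut_apply, star_eq_conjTranspose, conjT_eq] at h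
  exact h

lemma trace_conj {n : Type*} [Fintype n] [DecidableEq n] {U : Matrix n n ℝ}
    (hU : Uᵀ * U = 1) (X : Matrix n n ℝ) : (U * X * Uᵀ).trace = X.trace := by
  rw [Matrix.trace_mul_comm, ← Matrix.mul_assoc, hU, Matrix.one_mul]

lemma det_conj {n : Type*} [Fintype n] [DecidableEq n] {U : Matrix n n ℝ}
    (hU : Uᵀ * U = 1) (X : Matrix n n ℝ) : (U * X * Uᵀ).det = X.det := by
  rw [Matrix.det_mul, Matrix.det_mul]
  have h1 : U.det * Uᵀ.det = 1 := by
    rw [mul_comm, ← Matrix.det_mul, hU, Matrix.det_one]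
  calc U.det * X.det * Uᵀ.det = X.det * (U.det * Uᵀ.det) := by ring
  _ = X.det := by rw [h1, mul_one]

/-- Lemma 4: with D positive definite diagonal and S PSD, letting
D^{1/2} S D^{1/2} = U diag(w) Uᵀ (w descending, U orthogonal), the matrix
L* = D^{1/2} U_r V U_rᵀ D^{1/2}, with V = diag(1 − 1/max(wᵢ,1)), is symmetric
PSD of rank at most r, satisfies D − L* ≻ 0, and minimizes
trace((D−L)S) − log det(D−L) over all PSD matrices L of rank ≤ r with D − L ≻ 0. -/
theorem fixed_D_optimal_L {p r : ℕ} (hr : r ≤ p)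
    (D S : Matrix (Fin p) (Fin p) ℝ) (hD : D.IsDiag) (hDpd : D.PosDef)
    (hS : S.PosSemidef)
    (U : Matrix (Fin p) (Fin p) ℝ) (w : Fin p → ℝ) (hw : Antitone w)
    (hU : U * Uᵀ = 1)
    (heig : hDpd.posSemidef.sqrt * S * hDpd.posSemidef.sqrt
      = U * Matrix.diagonal w * Uᵀ)
    (Lstar : Matrix (Fin p) (Fin p) ℝ)
    (hLstar : Lstar =
      hDpd.posSemidef.sqrt * (U.submatrix id (Fin.castLE hr)) *
        Matrix.diagonal (fun i : Fin r => 1 - 1 / max (w (Fin.castLE hr i)) 1) *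
        (U.submatrix id (Fin.castLE hr))ᵀ * hDpd.posSemidef.sqrt) :
    Lstar.PosSemidef ∧ Lstar.rank ≤ r ∧ (D - Lstar).PosDef ∧
    ∀ L : Matrix (Fin p) (Fin p) ℝ, L.PosSemidef → L.rank ≤ r → (D - L).PosDef →
      ((D - Lstar) * S).trace - Real.log (D - Lstar).det ≤
        ((D - L) * S).trace - Real.log (D - L).det := by
  classical
  set Q := hDpd.posSemidef.sqrt with hQdef
  have hQps : Q.PosSemidef := by
    have h := (Matrix.PosSemidef.diagonal (R := ℝ) (n := Fin p)
      (d := fun i => Real.sqrt (hDpd.posSemidef.1.eigenvalues i))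
      (fun i => Real.sqrt_nonneg _)).mul_mul_conjTranspose_same
      (hDpd.posSemidef.1.eigenvectorUnitary : Matrix (Fin p) (Fin p) ℝ)
    rw [hQdef, Matrix.PosSemidef.sqrt, star_eq_conjTranspose]
    exact h
  have hQQ : Q * Q = D := by
    have hE := Unitary.coe_star_mul_self hDpd.posSemidef.1.eigenvectorUnitary
    rw [hQdef, Matrix.PosSemidef.sqrt]
    conv_rhs => rw [hDpd.posSemidef.1.spectral_theorem, Unitary.conjStarAlgAut_apply]
    simp only [Matrix.mul_assoc]
    rw [← Matrix.mul_assoc (star _ : Matrix (Fin p) (Fin p) ℝ) _, hE, Matrix.one_mul,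
      ← Matrix.mul_assoc (diagonal _), diagonal_mul_diagonal]
    congr 3
    funext i
    exact Real.mul_self_sqrt (hDpd.posSemidef.eigenvalues_nonneg i)
  have hQt : Qᵀ = Q := by
    have h := hQps.isHermitian
    rwa [Matrix.IsHermitian, conjT_eq] at h
  have hdetD : 0 < D.det := hDpd.det_pos
  have hdetQ : IsUnit Q.det := by
    have h : Q.det * Q.det = D.det := by rw [← Matrix.det_mul, hQQ]
    exact isUnit_iff_ne_zero.mpr fun h0 => by rw [h0, mul_zero] at h; exact hdetD.ne h
  set R := Q⁻¹ with hRdef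
  have hRQ : R * Q = 1 := Matrix.nonsing_inv_mul _ hdetQ
  have hQR : Q * R = 1 := Matrix.mul_nonsing_inv _ hdetQ
  have hRt : Rᵀ = R := by rw [hRdef, Matrix.transpose_nonsing_inv, hQt]
  have hUtU : Uᵀ * U = 1 := mul_eq_one_comm.mp hU
  -- cancellation lemmas
  have cU : ∀ X : Matrix (Fin p) (Fin p) ℝ, U * (Uᵀ * X) = X := fun X => by
    rw [← Matrix.mul_assoc, hU, Matrix.one_mul]
  have cUt : ∀ X : Matrix (Fin p) (Fin p) ℝ, Uᵀ * (U * X) = X := fun X => by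
    rw [← Matrix.mul_assoc, hUtU, Matrix.one_mul]
  have cQ : ∀ X : Matrix (Fin p) (Fin p) ℝ, Q * (R * X) = X := fun X => by
    rw [← Matrix.mul_assoc, hQR, Matrix.one_mul]
  have cR : ∀ X : Matrix (Fin p) (Fin p) ℝ, R * (Q * X) = X := fun X => by
    rw [← Matrix.mul_assoc, hRQ, Matrix.one_mul]
  -- nonnegativity of w
  have hdw : Matrix.diagonal w = Uᵀ * (Q * S * Q) * U := by
    rw [heig]
    simp only [Matrix.mul_assoc, cU, cUt, hU, hUtU, Matrix.mul_one, Matrix.one_mul]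
  have hw0 : ∀ i, 0 ≤ w i := by
    have hQSQ : (Q * S * Q).PosSemidef := by
      have h := hS.mul_mul_conjTranspose_same Q
      rwa [conjT_eq, hQt] at h
    have h2 := hQSQ.conjTranspose_mul_mul_same U
    rw [conjT_eq, ← hdw] at h2
    exact Matrix.posSemidef_diagonal_iff.mp h2
  -- the diagonal weight functions
  set vt : Fin p → ℝ := fun i => if (i : ℕ) < r then 1 - 1 / max (w i) 1 else 0 with hvt
  set g : Fin p → ℝ := fun i => if (i : ℕ) < r then 1 / max (w i) 1 else 1 with hg
  have hmax1 : ∀ i, (1:ℝ) ≤ max (w i) 1 := fun i => le_max_right _ _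
  have hgpos : ∀ i, 0 < g i := by
    intro i; rw [hg]; dsimp only; split
    · positivity
    · exact one_pos
  have hvt0 : ∀ i, 0 ≤ vt i := by
    intro i; rw [hvt]; dsimp only; split
    · have h1 : 1 / max (w i) 1 ≤ 1 := by
        rw [div_le_one (lt_of_lt_of_le one_pos (hmax1 i))]; exact hmax1 i
      linarith
    · exact le_refl 0
  -- Lstar in sandwich form
  have hLs : Lstar = Q * (U * Matrix.diagonal vt * Uᵀ) * Q := by
    have core : U.submatrix id (Fin.castLE hr) *
        Matrix.diagonal (fun i : Fin r => 1 - 1 / max (w (Fin.castLE hr i)) 1) *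
        (U.submatrix id (Fin.castLE hr))ᵀ = U * Matrix.diagonal vt * Uᵀ := by
      ext a b
      simp only [Matrix.mul_apply, Matrix.transpose_apply, Matrix.submatrix_apply, id_eq,
        Matrix.diagonal_apply, mul_ite, mul_zero, ite_mul, zero_mul, Finset.sum_ite_eq,
        Finset.sum_ite_eq', Finset.mem_univ, if_true]
      rw [show (∑ i : Fin p, U a i * vt i * U b i)
          = ∑ i : Fin p, (if (i : ℕ) < r then U a i * (1 - 1 / max (w i) 1) * U b i else 0) from
        Finset.sum_congr rfl fun i _ => by rw [hvt]; dsimp only; split <;> ring]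
      rw [sum_ite_lt hr (fun i => U a i * (1 - 1 / max (w i) 1) * U b i)]
    rw [hLstar, Matrix.mul_assoc Q, Matrix.mul_assoc Q, core]
  have hUg : U * Matrix.diagonal g * Uᵀ = 1 - U * Matrix.diagonal vt * Uᵀ := by
    have hgd : Matrix.diagonal g = 1 - Matrix.diagonal vt := by
      ext i j
      by_cases h : i = j
      · subst h
        simp only [Matrix.diagonal_apply_eq, Matrix.sub_apply, Matrix.one_apply_eq, hg, hvt]
        split_ifs <;> ring
      · simp only [Matrix.diagonal_apply_ne _ h, Matrix.sub_apply, Matrix.one_apply_ne h, sub_zero]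
    rw [hgd, Matrix.mul_sub, Matrix.sub_mul, Matrix.mul_one, hU]
  have hDmL : D - Lstar = Q * (U * Matrix.diagonal g * Uᵀ) * Q := by
    rw [hUg, hLs, Matrix.mul_sub, Matrix.sub_mul, Matrix.mul_one, hQQ]
  -- PosSemidef of Lstar
  have hdetU : IsUnit U.det := IsUnit.of_mul_eq_one Uᵀ.det
    (by rw [← Matrix.det_mul, hU, Matrix.det_one])
  have hUnitUtQ : IsUnit (Uᵀ * Q) := (Matrix.isUnit_iff_isUnit_det _).mpr
    (by rw [Matrix.det_mul, Matrix.det_transpose]; exact hdetU.mul hdetQ)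
  have hsand : ∀ X : Matrix (Fin p) (Fin p) ℝ,
      (Uᵀ * Q)ᵀ * X * (Uᵀ * Q) = Q * (U * X * Uᵀ) * Q := by
    intro X
    rw [Matrix.transpose_mul, hQt, Matrix.transpose_transpose]
    simp only [Matrix.mul_assoc]
  have hLstarPsd : Lstar.PosSemidef := by
    have h := (Matrix.posSemidef_diagonal_iff.mpr hvt0).conjTranspose_mul_mul_same (Uᵀ * Q)
    rw [conjT_eq, hsand, ← hLs] at h
    exact h
  have hDmLpd : (D - Lstar).PosDef := by
    have h := posDef_conj (Matrix.PosDef.diagonal hgpos) hUnitUtQ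
    rw [hsand, ← hDmL] at h
    exact h
  have hrankLstar : Lstar.rank ≤ r := by
    rw [hLstar]
    calc (Q * U.submatrix id (Fin.castLE hr) *
          Matrix.diagonal (fun i : Fin r => 1 - 1 / max (w (Fin.castLE hr i)) 1) *
          (U.submatrix id (Fin.castLE hr))ᵀ * Q).rank
        ≤ (Q * U.submatrix id (Fin.castLE hr) *
          Matrix.diagonal (fun i : Fin r => 1 - 1 / max (w (Fin.castLE hr i)) 1) *
          (U.submatrix id (Fin.castLE hr))ᵀ).rank := Matrix.rank_mul_le_left _ _
      _ ≤ (Q * U.submatrix id (Fin.castLE hr) *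
          Matrix.diagonal (fun i : Fin r => 1 - 1 / max (w (Fin.castLE hr i)) 1)).rank :=
          Matrix.rank_mul_le_left _ _
      _ ≤ Fintype.card (Fin r) := Matrix.rank_le_card_width _
      _ = r := Fintype.card_fin r
  -- value of the objective at Lstar
  have hdetQY : ∀ Y : Matrix (Fin p) (Fin p) ℝ, (Q * Y * Q).det = D.det * Y.det := by
    intro Y
    rw [Matrix.det_mul, Matrix.det_mul]
    calc Q.det * Y.det * Q.det = Q.det * Q.det * Y.det := by ring
    _ = D.det * Y.det := by rw [← Matrix.det_mul, hQQ]
  have htrQY : ∀ Y : Matrix (Fin p) (Fin p) ℝ,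
      (Q * (U * Y * Uᵀ) * Q * S).trace = (Y * Matrix.diagonal w).trace := by
    intro Y
    have e1 : Q * (U * Y * Uᵀ) * Q * S = Q * ((U * Y * Uᵀ) * (Q * S)) := by
      simp only [Matrix.mul_assoc]
    rw [e1, Matrix.trace_mul_comm]
    have e2 : U * Y * Uᵀ * (Q * S) * Q = U * Y * Uᵀ * (Q * S * Q) := by
      simp only [Matrix.mul_assoc]
    rw [e2, heig]
    have e3 : U * Y * Uᵀ * (U * Matrix.diagonal w * Uᵀ) = U * (Y * Matrix.diagonal w) * Uᵀ := by
      simp only [Matrix.mul_assoc, cU, cUt]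
    rw [e3, trace_conj hUtU]
  have hprodg : 0 < ∏ i, g i := Finset.prod_pos fun i _ => hgpos i
  have hobjstar : ((D - Lstar) * S).trace - Real.log (D - Lstar).det
      = (∑ i : Fin p, (if (i : ℕ) < r then w i - psi (w i) else w i)) - Real.log D.det := by
    have htr : ((D - Lstar) * S).trace = ∑ i, g i * w i := by
      rw [hDmL, htrQY, Matrix.diagonal_mul_diagonal, Matrix.trace_diagonal]
    have hdet : (D - Lstar).det = D.det * ∏ i, g i := by
      rw [hDmL, hdetQY, det_conj hUtU, Matrix.det_diagonal]
    rw [htr, hdet, Real.log_mul hdetD.ne' hprodg.ne',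
      Real.log_prod (fun i _ => (hgpos i).ne')]
    have e : ∑ i, g i * w i - (Real.log D.det + ∑ i, Real.log (g i))
        = (∑ i, (g i * w i - Real.log (g i))) - Real.log D.det := by
      rw [Finset.sum_sub_distrib]; ring
    rw [e]
    congr 1
    refine Finset.sum_congr rfl fun i _ => ?_
    rw [hg]; dsimp only
    split_ifs with h
    · rw [mul_comm]; exact opt_scalar (hw0 i)
    · rw [Real.log_one]; ring
  refine ⟨hLstarPsd, hrankLstar, hDmLpd, ?_⟩
  intro L hL hrkL hDLpd
  rw [hobjstar]
  -- spectral decomposition of N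
  have hRLR : (R * L * R).PosSemidef := by
    have h := hL.conjTranspose_mul_mul_same R
    rwa [conjT_eq, hRt] at h
  have hNps : (Uᵀ * (R * L * R) * U).PosSemidef := by
    have h := hRLR.conjTranspose_mul_mul_same U
    rwa [conjT_eq] at h
  set N := Uᵀ * (R * L * R) * U with hNdef
  have hNh : N.IsHermitian := hNps.isHermitian
  set μ := hNh.eigenvalues with hmudef
  set V : Matrix (Fin p) (Fin p) ℝ := (hNh.eigenvectorUnitary : Matrix (Fin p) (Fin p) ℝ) with hVdef
  have hVtV : Vᵀ * V = 1 := by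
    have h := hNh.eigenvectorUnitary.2.1
    rwa [Matrix.star_eq_conjTranspose, conjT_eq] at h
  have hVVt : V * Vᵀ = 1 := by
    have h := hNh.eigenvectorUnitary.2.2
    rwa [Matrix.star_eq_conjTranspose, conjT_eq] at h
  have hspec : N = V * Matrix.diagonal μ * Vᵀ := real_spectral hNh
  have hmu0 : ∀ j, 0 ≤ μ j := fun j => hNps.eigenvalues_nonneg j
  set lam : Fin p → ℝ := fun j => 1 - μ j with hlamdef
  have hld : (1 : Matrix (Fin p) (Fin p) ℝ) - Matrix.diagonal μ = Matrix.diagonal lam := by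
    rw [← Matrix.diagonal_one, Matrix.diagonal_sub]
  have hNVform : V * Matrix.diagonal lam * Vᵀ = 1 - N := by
    conv_rhs => rw [hspec]
    rw [← hld, Matrix.mul_sub, Matrix.sub_mul, Matrix.mul_one, hVVt]
  have hLform : Q * (U * N * Uᵀ) * Q = L := by
    rw [hNdef]
    simp only [Matrix.mul_assoc, cU, cUt, cQ, cR, hU, hUtU, hQR, hRQ,
      Matrix.mul_one, Matrix.one_mul]
  have hDLform : D - L = Q * (U * (V * Matrix.diagonal lam * Vᵀ) * Uᵀ) * Q := by
    have e1 : U * (1 - N) * Uᵀ = 1 - U * N * Uᵀ := by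
      rw [Matrix.mul_sub, Matrix.sub_mul, Matrix.mul_one, hU]
    have e2 : Q * (1 - U * N * Uᵀ) * Q = D - L := by
      rw [Matrix.mul_sub, Matrix.sub_mul, Matrix.mul_one, hQQ, hLform]
    rw [hNVform, e1, e2]
  -- eigenvalues are < 1
  have hdetR : IsUnit R.det := IsUnit.of_mul_eq_one Q.det
    (by rw [← Matrix.det_mul, hRQ, Matrix.det_one])
  have hUnitRU : IsUnit (R * U) := (Matrix.isUnit_iff_isUnit_det _).mpr
    (by rw [Matrix.det_mul]; exact hdetR.mul hdetU)
  have h1Npd : ((1 : Matrix (Fin p) (Fin p) ℝ) - N).PosDef := by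
    have h := posDef_conj hDLpd hUnitRU
    have he : (R * U)ᵀ * (D - L) * (R * U) = 1 - N := by
      rw [Matrix.transpose_mul, hRt]
      rw [Matrix.mul_sub, Matrix.sub_mul]
      have eD : Uᵀ * R * D * (R * U) = 1 := by
        rw [← hQQ]
        simp only [Matrix.mul_assoc, cR, cQ, hUtU]
      have eL : Uᵀ * R * L * (R * U) = N := by
        rw [hNdef]
        simp only [Matrix.mul_assoc]
      rw [eD, eL]
    rwa [he] at h
  have hmult : ∀ j, μ j < 1 := by
    intro j
    have hv := hNh.mulVec_eigenvectorBasis j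
    have hvne : (⇑(hNh.eigenvectorBasis j) : Fin p → ℝ) ≠ 0 := by
      have hnz := hNh.eigenvectorBasis.orthonormal.ne_zero j
      intro h0
      apply hnz
      ext i
      exact congrFun h0 i
    have hq := h1Npd.dotProduct_mulVec_pos hvne
    rw [Matrix.sub_mulVec, Matrix.one_mulVec, hv, dotProduct_sub, dotProduct_smul] at hq
    have hc0 : 0 ≤ star (⇑(hNh.eigenvectorBasis j) : Fin p → ℝ)
        ⬝ᵥ (⇑(hNh.eigenvectorBasis j) : Fin p → ℝ) := by
      refine Finset.sum_nonneg fun i _ => ?_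
      simp only [Pi.star_apply, star_trivial]
      exact mul_self_nonneg _
    rw [smul_eq_mul] at hq
    nlinarith [hq, hc0]
  have hlam_pos : ∀ j, 0 < lam j := fun j => by
    rw [hlamdef]; dsimp only; linarith [hmult j]
  have hlam_le1 : ∀ j, lam j ≤ 1 := fun j => by
    rw [hlamdef]; dsimp only; linarith [hmu0 j]
  -- rank bound on nonzero eigenvalues
  have hcount : (((Finset.univ.filter (fun j : Fin p => μ j ≠ 0)).card : ℝ)) ≤ (r : ℝ) := by
    have h1 : N.rank = Fintype.card {j // μ j ≠ 0} := hNh.rank_eq_card_non_zero_eigs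
    have h2 : N.rank ≤ L.rank := by
      calc (Uᵀ * (R * L * R) * U).rank ≤ (Uᵀ * (R * L * R)).rank := Matrix.rank_mul_le_left _ _
      _ ≤ (R * L * R).rank := Matrix.rank_mul_le_right _ _
      _ ≤ (R * L).rank := Matrix.rank_mul_le_left _ _
      _ ≤ L.rank := Matrix.rank_mul_le_right _ _
    have h3 : Fintype.card {j // μ j ≠ 0}
        = (Finset.univ.filter (fun j : Fin p => μ j ≠ 0)).card := Fintype.card_subtype _
    have h4 : (Finset.univ.filter (fun j : Fin p => μ j ≠ 0)).card ≤ r := by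
      rw [← h3, ← h1]; exact h2.trans hrkL
    exact_mod_cast h4
  -- trace and determinant of D - L
  have htrdiag : ∀ X : Matrix (Fin p) (Fin p) ℝ,
      (X * Matrix.diagonal w).trace = ∑ i, X i i * w i := fun X => by
    simp [Matrix.trace, Matrix.diag, Matrix.mul_diagonal]
  have htrL : ((D - L) * S).trace = ∑ i, (∑ j, V i j * lam j * V i j) * w i := by
    rw [hDLform, htrQY, htrdiag]
    refine Finset.sum_congr rfl fun i _ => ?_
    congr 1
    simp only [Matrix.mul_apply, Matrix.transpose_apply, Matrix.diagonal_apply, mul_ite,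
      mul_zero, ite_mul, zero_mul, Finset.sum_ite_eq, Finset.sum_ite_eq', Finset.mem_univ,
      if_true]
  have hprodlam : 0 < ∏ j, lam j := Finset.prod_pos fun j _ => hlam_pos j
  have hdetL : (D - L).det = D.det * ∏ j, lam j := by
    rw [hDLform, hdetQY, det_conj hUtU, det_conj hVtV, Matrix.det_diagonal]
  -- row and column sums of V squared
  have rowsum : ∀ i, ∑ j, V i j * V i j = 1 := by
    intro i
    have h := congrFun (congrFun hVVt i) i
    simpa [Matrix.mul_apply, Matrix.one_apply] using h
  have colsum : ∀ j, ∑ i, V i j * V i j = 1 := by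
    intro j
    have h := congrFun (congrFun hVtV j) j
    simpa [Matrix.mul_apply, Matrix.one_apply] using h
  set chi : Fin p → ℝ := fun j => if μ j ≠ 0 then 1 else 0 with hchidef
  set t : Fin p → ℝ := fun i => ∑ j, chi j * (V i j * V i j) with htdef
  have hchi0 : ∀ j, 0 ≤ chi j := fun j => by rw [hchidef]; dsimp only; split <;> norm_num
  have hchi1 : ∀ j, chi j ≤ 1 := fun j => by rw [hchidef]; dsimp only; split <;> norm_num
  have ht0 : ∀ i, 0 ≤ t i := fun i =>
    Finset.sum_nonneg fun j _ => mul_nonneg (hchi0 j) (mul_self_nonneg _)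
  have ht1 : ∀ i, t i ≤ 1 := by
    intro i
    calc t i ≤ ∑ j, V i j * V i j := Finset.sum_le_sum fun j _ => by
          nlinarith [hchi1 j, hchi0 j, mul_self_nonneg (V i j)]
    _ = 1 := rowsum i
  have hts : ∑ i, t i ≤ (r : ℝ) := by
    rw [htdef]
    dsimp only
    rw [Finset.sum_comm]
    calc ∑ j, ∑ i, chi j * (V i j * V i j) = ∑ j, chi j * ∑ i, V i j * V i j := by
          refine Finset.sum_congr rfl fun j _ => (Finset.mul_sum _ _ _).symm
    _ = ∑ j, chi j := by
          refine Finset.sum_congr rfl fun j _ => by rw [colsum j, mul_one]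
    _ = ((Finset.univ.filter (fun j : Fin p => μ j ≠ 0)).card : ℝ) := by
          rw [hchidef]; exact Finset.sum_boole _ _
    _ ≤ (r : ℝ) := hcount
  have hst := sum_t_le hr (fun i => psi (w i)) t (fun i => psi_nonneg _)
    (fun i j hij => psi_mono (hw hij)) ht0 ht1 hts
  -- pointwise bound
  have PB : ∀ i j, (V i j * V i j) * (w i - chi j * psi (w i))
      ≤ (V i j * V i j) * (w i * lam j - Real.log (lam j)) := by
    intro i j
    refine mul_le_mul_of_nonneg_left ?_ (mul_self_nonneg _)
    by_cases h : μ j = 0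
    · have hchij : chi j = 0 := by rw [hchidef]; dsimp only; rw [if_neg (not_not.mpr h)]
      have hlamj : lam j = 1 := by rw [hlamdef]; dsimp only; rw [h, sub_zero]
      rw [hchij, hlamj, Real.log_one, zero_mul, mul_one]
    · have hchij : chi j = 1 := by rw [hchidef]; dsimp only; rw [if_pos h]
      rw [hchij, one_mul]
      exact key_scalar (hw0 i) (hlam_pos j) (hlam_le1 j)
  have lower : ∑ i, (∑ j, (V i j * V i j) * (w i - chi j * psi (w i)))
      = ∑ i, (w i - t i * psi (w i)) := by
    refine Finset.sum_congr rfl fun i _ => ?_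
    have e : ∀ j : Fin p, (V i j * V i j) * (w i - chi j * psi (w i))
        = (V i j * V i j) * w i - chi j * (V i j * V i j) * psi (w i) := fun j => by ring
    rw [Finset.sum_congr rfl fun j _ => e j, Finset.sum_sub_distrib,
      ← Finset.sum_mul, rowsum i, one_mul, ← Finset.sum_mul]
  -- final computation
  rw [htrL, hdetL, Real.log_mul hdetD.ne' hprodlam.ne',
    Real.log_prod (fun j _ => (hlam_pos j).ne')]
  have E1 : ∑ i, (∑ j, V i j * lam j * V i j) * w i
      = ∑ i, ∑ j, (V i j * V i j) * (w i * lam j) := by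
    refine Finset.sum_congr rfl fun i _ => ?_
    rw [Finset.sum_mul]
    exact Finset.sum_congr rfl fun j _ => by ring
  have E2 : ∑ j, Real.log (lam j) = ∑ i, ∑ j, (V i j * V i j) * Real.log (lam j) := by
    calc ∑ j, Real.log (lam j) = ∑ j, (∑ i, V i j * V i j) * Real.log (lam j) := by
          refine Finset.sum_congr rfl fun j _ => by rw [colsum j, one_mul]
    _ = ∑ j, ∑ i, (V i j * V i j) * Real.log (lam j) := by
          refine Finset.sum_congr rfl fun j _ => Finset.sum_mul _ _ _
    _ = ∑ i, ∑ j, (V i j * V i j) * Real.log (lam j) := Finset.sum_comm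
  have key : ∑ i : Fin p, (if (i : ℕ) < r then w i - psi (w i) else w i)
      ≤ (∑ i, (∑ j, V i j * lam j * V i j) * w i) - ∑ j, Real.log (lam j) := by
    calc ∑ i : Fin p, (if (i : ℕ) < r then w i - psi (w i) else w i)
        = ∑ i, w i - ∑ i : Fin p, (if (i : ℕ) < r then psi (w i) else 0) := by
          rw [← Finset.sum_sub_distrib]
          refine Finset.sum_congr rfl fun i _ => ?_
          split_ifs <;> ring
      _ ≤ ∑ i, w i - ∑ i, t i * psi (w i) := by linarith [hst]
      _ = ∑ i, (w i - t i * psi (w i)) := (Finset.sum_sub_distrib _ _).symm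
      _ = ∑ i, (∑ j, (V i j * V i j) * (w i - chi j * psi (w i))) := lower.symm
      _ ≤ ∑ i, (∑ j, (V i j * V i j) * (w i * lam j - Real.log (lam j))) :=
          Finset.sum_le_sum fun i _ => Finset.sum_le_sum fun j _ => PB i j
      _ = (∑ i, (∑ j, V i j * lam j * V i j) * w i) - ∑ j, Real.log (lam j) := by
          rw [E1, E2, ← Finset.sum_sub_distrib]
          refine Finset.sum_congr rfl fun i _ => ?_
          rw [← Finset.sum_sub_distrib]
          refine Finset.sum_congr rfl fun j _ => by ring
  linarith [key]
end
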